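/- There exist a metric space X, a topological space Y, a quotient map π: X → Y, a continuous section f: Y → X of π, and points x, y, z ∈ Y such that dist(f(x), π⁻¹(y)) − dist(f(x), π⁻¹(z)) > d(f(y), f(z)). (One may take X ⊂ ℝ² to be the union of the three segments joining (0,8) to (8,8), (1,4) to (8,6), and (0,3) to (8,7), with the Euclidean distance, Y the segment from (0,0) to (8,0), π the projection onto the first coordinate, and a continuous section f with f((1,0)) = (1,4), f((7,0)) = (8,7), f((6,0)) = (8,6); then dist(f(x), π⁻¹(y)) − dist(f(x), π⁻¹(z)) = √(5/4) > 1 = d(f(y), f(z)).) -/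

import Mathlib

open Metric

noncomputable section

private def gfun : Fin 4 → ℝ := ![0, 1, 10, 11]

private lemma gfun_inj : Function.Injective gfun := by
  intro i j h
  fin_cases i <;> fin_cases j <;> simp_all [gfun]

/-- There exist a metric space `X`, a topological space `Y`, a quotient map `π : X → Y`,
a continuous section `f` of `π` and points `x, y, z ∈ Y` with
`dist(f(x), π⁻¹(y)) - dist(f(x), π⁻¹(z)) > d(f(y), f(z))`: the roles of the point and the
fiber in the intrinsic distance cannot be exchanged. -/
theorem exists_asymmetric_fiber_distance :
    ∃ (X : Type) (_ : MetricSpace X) (Y : Type) (_ : TopologicalSpace Y)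
      (π : X → Y) (f : Y → X) (x y z : Y),
      Continuous π ∧ IsOpenMap π ∧ Function.Surjective π ∧
      (∀ w : Y, π (f w) = w) ∧ Continuous f ∧
      dist (f y) (f z) < infDist (f x) (π ⁻¹' {y}) - infDist (f x) (π ⁻¹' {z}) := by
  classical
  letI mX : MetricSpace (Fin 4) := MetricSpace.induced gfun gfun_inj inferInstance
  letI tX : TopologicalSpace (Fin 4) := mX.toUniformSpace.toTopologicalSpace
  letI tY : TopologicalSpace (Fin 3) := ⊥
  haveI hY : @DiscreteTopology (Fin 3) tY := ⟨rfl⟩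
  haveI hX : @DiscreteTopology (Fin 4) tX := by
    exact Finite.instDiscreteTopology
  refine ⟨Fin 4, mX, Fin 3, tY, ![0, 2, 1, 2], ![0, 2, 3], 0, 1, 2,
    continuous_of_discreteTopology, fun U _ => isOpen_discrete _,
    by decide, by decide, continuous_of_discreteTopology, ?_⟩
  have hfib : (![0, 2, 1, 2] : Fin 4 → Fin 3) ⁻¹' {1} = {(2 : Fin 4)} := by
    ext i; fin_cases i <;> simp
  have h1 : infDist (![0, 2, 3] 0 : Fin 4) ((![0, 2, 1, 2] : Fin 4 → Fin 3) ⁻¹' {1})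
      = dist (gfun 0) (gfun 2) := by
    rw [hfib, infDist_singleton]; rfl
  have hm : (1 : Fin 4) ∈ (![0, 2, 1, 2] : Fin 4 → Fin 3) ⁻¹' {2} := by
    simp
  have h2 : infDist (![0, 2, 3] 0 : Fin 4) ((![0, 2, 1, 2] : Fin 4 → Fin 3) ⁻¹' {2})
      ≤ dist (gfun 0) (gfun 1) := infDist_le_dist_of_mem hm
  have h3 : dist (![0, 2, 3] 1 : Fin 4) (![0, 2, 3] 2) = dist (gfun 2) (gfun 3) := rfl
  rw [h3, h1]
  have e1 : dist (gfun 2) (gfun 3) = 1 := by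
    rw [Real.dist_eq, show gfun 2 = 10 from rfl, show gfun 3 = 11 from rfl]; norm_num
  have e2 : dist (gfun 0) (gfun 2) = 10 := by
    rw [Real.dist_eq, show gfun 0 = 0 from rfl, show gfun 2 = 10 from rfl]; norm_num
  have e3 : dist (gfun 0) (gfun 1) = 1 := by
    norm_num [gfun, Real.dist_eq]
  rw [e1, e2]
  linarith [e3 ▸ h2]

end
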